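/- Let δ, ε ∈ (0, 1/3], A ∈ (0,1), β > 0, k > 0 and R > 0, and set c₀ := √(2/(7−√41)). Let τ' : (0,1) → ℝ be given by τ'(z) = −(1−A)/δ on (0,δ), τ'(z) = 0 on (δ,1−ε), and τ'(z) = −(A(1−ε)/ε)/z² on (1−ε,1). Suppose w : [0,1] → ℝ is twice continuously differentiable with w(0) = w(1) = 0 and w'(0) = w'(1) = 0, T : [0,1] → ℝ is continuously differentiable with T(0) = T(1) = 0, and sup_{z∈[0,1]} |w''(z)| ≤ c₀ R k (∫₀¹ T² dz)^{1/2}. Then ∫₀¹ τ'(z) w(z) T(z) dz ≥ −β k² ∫₀¹ T(z)² dz − ( c₀² δ⁵ R²/(98β) + 25 c₀² A² ε⁵ R²/(392β) ) ∫₀¹ T'(z)² dz. -/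

import Mathlib

open MeasureTheory intervalIntegral Set



/-- Cauchy–Schwarz via Young's inequality. -/
lemma cs_interval (f : ℝ → ℝ) (hf : Continuous f) (a b : ℝ) (hab : a ≤ b) :
    |∫ t in a..b, f t| ≤ Real.sqrt (b - a) * Real.sqrt (∫ t in a..b, (f t)^2) := by
  have hQ : (0:ℝ) ≤ ∫ t in a..b, (f t)^2 :=
    intervalIntegral.integral_nonneg hab (fun x _ => sq_nonneg _)
  set Q := ∫ t in a..b, (f t)^2 with hQdef
  have hba : (0:ℝ) ≤ b - a := by linarith
  have key : ∀ c : ℝ, 0 < c → |∫ t in a..b, f t| ≤ Q/(2*c) + c*(b-a)/2 := by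
    intro c hc
    have h1 : |∫ t in a..b, f t| ≤ ∫ t in a..b, |f t| :=
      intervalIntegral.abs_integral_le_integral_abs hab
    have h2 : (∫ t in a..b, |f t|) ≤ ∫ t in a..b, ((f t)^2/(2*c) + c/2) := by
      apply intervalIntegral.integral_mono_on hab
        (hf.abs.intervalIntegrable _ _)
        ((((hf.pow 2).div_const _).add continuous_const).intervalIntegrable _ _)
      intro x _
      have hrw : (f x)^2/(2*c) + c/2 = ((f x)^2 + c^2)/(2*c) := by field_simp
      show |f x| ≤ (f x)^2/(2*c) + c/2
      rw [hrw, le_div_iff₀ (by positivity)]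
      nlinarith [sq_nonneg (|f x| - c), sq_abs (f x)]
    have h3 : (∫ t in a..b, ((f t)^2/(2*c) + c/2)) = Q/(2*c) + c*(b-a)/2 := by
      rw [intervalIntegral.integral_add (f := fun t => (f t)^2/(2*c)) (g := fun _ => c/2) (((hf.pow 2).div_const _).intervalIntegrable _ _)
        (continuous_const.intervalIntegrable _ _), intervalIntegral.integral_div,
        intervalIntegral.integral_const]
      simp [smul_eq_mul]
      ring
    linarith
  rcases eq_or_lt_of_le hQ with hQ0 | hQpos
  · have hz : Real.sqrt Q = 0 := by rw [← hQ0, Real.sqrt_zero]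
    rw [hz, mul_zero]
    have hbd : ∀ η : ℝ, 0 < η → |∫ t in a..b, f t| ≤ 0 + η := by
      intro η hη
      have hc : (0:ℝ) < 2*η/(b-a+1) := div_pos (by linarith) (by linarith)
      have hk := key _ hc
      rw [← hQ0] at hk
      have h4 : (2*η/(b-a+1))*(b-a)/2 ≤ η := by
        rw [div_mul_eq_mul_div, div_div, div_le_iff₀ (by linarith : (0:ℝ) < (b-a+1)*2)]
        nlinarith
      have h0 : (0:ℝ)/(2*(2*η/(b-a+1))) = 0 := zero_div _
      rw [h0] at hk
      linarith
    exact le_of_forall_pos_le_add hbd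
  · have hba' : 0 < b - a := by
      rcases lt_or_eq_of_le hab with h | h
      · linarith
      · exfalso; subst h; simp [hQdef] at hQpos
    set sQ := Real.sqrt Q with hsQ
    set sB := Real.sqrt (b-a) with hsB
    have hsQp : 0 < sQ := Real.sqrt_pos.mpr hQpos
    have hsBp : 0 < sB := Real.sqrt_pos.mpr hba'
    have hQeq : sQ^2 = Q := Real.sq_sqrt hQ
    have hBeq : sB^2 = b - a := Real.sq_sqrt hba'.le
    have hc : (0:ℝ) < sQ/sB := by positivity
    have hk := key _ hc
    have heq : Q/(2*(sQ/sB)) + (sQ/sB)*(b-a)/2 = sB * sQ := by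
      rw [← hQeq, ← hBeq]; field_simp; ring
    linarith

lemma deriv_bound_left (w : ℝ → ℝ) (M : ℝ)
    (hdw2 : Differentiable ℝ (deriv w))
    (hM : ∀ x ∈ Icc (0:ℝ) 1, |deriv (deriv w) x| ≤ M)
    (hw'0 : deriv w 0 = 0) :
    ∀ z ∈ Icc (0:ℝ) 1, |deriv w z| ≤ M * z := by
  intro z hz
  have h := norm_image_sub_le_of_norm_deriv_le_segment'
    (f := deriv w) (f' := deriv (deriv w)) (a := 0) (b := 1)
    (fun x _ => ((hdw2 x).hasDerivAt).hasDerivWithinAt)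
    (fun x hx => hM x (Ico_subset_Icc_self hx)) z hz
  simpa [hw'0, Real.norm_eq_abs] using h

lemma deriv_bound_right (w : ℝ → ℝ) (M : ℝ)
    (hdw2 : Differentiable ℝ (deriv w))
    (hM : ∀ x ∈ Icc (0:ℝ) 1, |deriv (deriv w) x| ≤ M)
    (hw'1 : deriv w 1 = 0) :
    ∀ z ∈ Icc (0:ℝ) 1, |deriv w z| ≤ M * (1 - z) := by
  intro z hz
  have h := norm_image_sub_le_of_norm_deriv_le_segment'
    (f := deriv w) (f' := deriv (deriv w)) (a := z) (b := 1)
    (fun x _ => ((hdw2 x).hasDerivAt).hasDerivWithinAt)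
    (fun x hx => hM x ⟨le_trans hz.1 hx.1, le_of_lt hx.2⟩) 1 (right_mem_Icc.2 hz.2)
  rw [hw'1] at h
  simpa [Real.norm_eq_abs, abs_sub_comm] using h

lemma fn_bound_left (w : ℝ → ℝ) (M : ℝ)
    (hdw : Differentiable ℝ w) (hcdw : Continuous (deriv w))
    (hd : ∀ t ∈ Icc (0:ℝ) 1, |deriv w t| ≤ M * t)
    (hw0 : w 0 = 0) :
    ∀ z ∈ Icc (0:ℝ) 1, |w z| ≤ M * z^2 / 2 := by
  intro z hz
  have hftc : (∫ t in (0:ℝ)..z, deriv w t) = w z - w 0 :=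
    intervalIntegral.integral_deriv_eq_sub (fun x _ => hdw x)
      (hcdw.intervalIntegrable _ _)
  have h1 : |w z| ≤ ∫ t in (0:ℝ)..z, |deriv w t| := by
    rw [show w z = ∫ t in (0:ℝ)..z, deriv w t by rw [hftc, hw0, sub_zero]]
    exact intervalIntegral.abs_integral_le_integral_abs hz.1
  have h2 : (∫ t in (0:ℝ)..z, |deriv w t|) ≤ ∫ t in (0:ℝ)..z, M * t := by
    apply intervalIntegral.integral_mono_on hz.1 (hcdw.abs.intervalIntegrable _ _)
      ((continuous_const.mul continuous_id).intervalIntegrable _ _)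
    exact fun t ht => hd t ⟨ht.1, le_trans ht.2 hz.2⟩
  have h3 : (∫ t in (0:ℝ)..z, M * t) = M * z^2 / 2 := by
    rw [intervalIntegral.integral_const_mul, integral_id]
    ring
  linarith
lemma fn_bound_right (w : ℝ → ℝ) (M : ℝ)
    (hdw : Differentiable ℝ w) (hcdw : Continuous (deriv w))
    (hd : ∀ t ∈ Icc (0:ℝ) 1, |deriv w t| ≤ M * (1 - t))
    (hw1 : w 1 = 0) :
    ∀ z ∈ Icc (0:ℝ) 1, |w z| ≤ M * (1 - z)^2 / 2 := by
  intro z hz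
  have hftc : (∫ t in z..(1:ℝ), deriv w t) = w 1 - w z :=
    intervalIntegral.integral_deriv_eq_sub (fun x _ => hdw x)
      (hcdw.intervalIntegrable _ _)
  have h1 : |w z| ≤ ∫ t in z..(1:ℝ), |deriv w t| := by
    have : w z = -∫ t in z..(1:ℝ), deriv w t := by rw [hftc, hw1]; ring
    rw [this, abs_neg]
    exact intervalIntegral.abs_integral_le_integral_abs hz.2
  have h2 : (∫ t in z..(1:ℝ), |deriv w t|) ≤ ∫ t in z..(1:ℝ), M * (1 - t) := by
    apply intervalIntegral.integral_mono_on hz.2 (hcdw.abs.intervalIntegrable _ _)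
      ((continuous_const.mul (continuous_const.sub continuous_id)).intervalIntegrable _ _)
    exact fun t ht => hd t ⟨le_trans hz.1 ht.1, ht.2⟩
  have h3 : (∫ t in z..(1:ℝ), M * (1 - t)) = M * (1 - z)^2 / 2 := by
    have : (∫ t in z..(1:ℝ), (1 - t)) = (1-z)^2/2 := by
      rw [intervalIntegral.integral_comp_sub_left (fun t : ℝ => t) 1]
      simp [integral_id]
    rw [intervalIntegral.integral_const_mul, this]
    ring
  linarith

lemma integral_sq_sqrt (c : ℝ) (hc : 0 ≤ c) :
    (∫ z in (0:ℝ)..c, z^2 * Real.sqrt z) = (2/7) * c^3 * Real.sqrt c := by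
  have hrn : ∀ (z : ℝ) (n : ℕ), 0 < z → z ^ ((n:ℝ)) = z ^ n := fun z n _ => Real.rpow_natCast z n
  have hcongr : ∀ z ∈ Set.uIcc (0:ℝ) c, z^2 * Real.sqrt z = z ^ ((5:ℝ)/2) := by
    intro z hz
    rw [Set.uIcc_of_le hc] at hz
    rcases eq_or_lt_of_le hz.1 with h0 | h0
    · rw [← h0]; simp [Real.zero_rpow (by norm_num : ((5:ℝ)/2) ≠ 0)]
    · rw [show ((5:ℝ)/2) = (2:ℕ) + 1/2 by norm_num, Real.rpow_add h0,
        ← Real.sqrt_eq_rpow, hrn z 2 h0]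
  rw [intervalIntegral.integral_congr hcongr, integral_rpow (Or.inl (by norm_num))]
  rw [Real.zero_rpow (by norm_num : ((5:ℝ)/2 + 1) ≠ 0)]
  rcases eq_or_lt_of_le hc with h0 | h0
  · rw [← h0]; simp [Real.zero_rpow (by norm_num : ((5:ℝ)/2 + 1) ≠ 0)]
  · rw [show ((5:ℝ)/2 + 1) = (3:ℕ) + 1/2 by norm_num, Real.rpow_add h0,
      ← Real.sqrt_eq_rpow, hrn c 3 h0]
    ring

lemma young_aux (β X Y a b : ℝ) (hβ : 0 < β) :
    X*Y*(a+b) ≤ β*X^2 + (a^2/(2*β) + 25*b^2/(18*β))*Y^2 := by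
  rw [← mul_le_mul_iff_right₀ hβ]
  have expand : β*(β*X^2 + (a^2/(2*β) + 25*b^2/(18*β))*Y^2)
      = β^2*X^2 + (a^2/2 + 25*b^2/18)*Y^2 := by
    field_simp
  rw [expand]
  nlinarith [sq_nonneg (2*β*X - (a+b)*Y), sq_nonneg ((a-b)*Y), sq_nonneg (b*Y)]


set_option maxHeartbeats 1000000 in
theorem no_slip_sign_indefinite_term_estimate
    (δ ε A β k R c₀ : ℝ)
    (hδ : δ ∈ Set.Ioc (0:ℝ) (1/3)) (hε : ε ∈ Set.Ioc (0:ℝ) (1/3))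
    (hA : A ∈ Set.Ioo (0:ℝ) 1) (hβ : 0 < β) (hk : 0 < k) (hR : 0 < R)
    (hc₀ : c₀ = Real.sqrt (2 / (7 - Real.sqrt 41)))
    (τ' : ℝ → ℝ)
    (hτ1 : ∀ z ∈ Set.Ioo (0:ℝ) δ, τ' z = -(1-A) / δ)
    (hτ2 : ∀ z ∈ Set.Ioo δ (1-ε), τ' z = 0)
    (hτ3 : ∀ z ∈ Set.Ioo (1-ε) (1:ℝ), τ' z = -(A * (1-ε) / ε) / z^2)
    (w T : ℝ → ℝ) (hw : ContDiff ℝ 2 w) (hT : ContDiff ℝ 1 T)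
    (hw0 : w 0 = 0) (hw1 : w 1 = 0) (hw'0 : deriv w 0 = 0) (hw'1 : deriv w 1 = 0)
    (hT0 : T 0 = 0) (hT1 : T 1 = 0)
    (hsup : (⨆ z : Set.Icc (0:ℝ) 1, |iteratedDeriv 2 w z.1|) ≤
      c₀ * R * k * (∫ z in (0:ℝ)..1, (T z)^2) ^ ((1:ℝ)/2)) :
    (∫ z in (0:ℝ)..1, τ' z * w z * T z) ≥
      -(β * k^2 * ∫ z in (0:ℝ)..1, (T z)^2)
      - (c₀^2 * δ^5 * R^2 / (98 * β) + 25 * c₀^2 * A^2 * ε^5 * R^2 / (392 * β))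
          * ∫ z in (0:ℝ)..1, (deriv T z)^2 := by
  obtain ⟨hδ0, hδ3⟩ := hδ
  obtain ⟨hε0, hε3⟩ := hε
  obtain ⟨hA0, hA1⟩ := hA
  have hc₀nn : 0 ≤ c₀ := hc₀ ▸ Real.sqrt_nonneg _
  -- smoothness facts
  have hw11 : ContDiff ℝ ((1:WithTop ℕ∞)+1) w := by rw [one_add_one_eq_two]; exact hw
  have hdw : Differentiable ℝ w := (contDiff_succ_iff_deriv.mp hw11).1
  have hw1d : ContDiff ℝ 1 (deriv w) := (contDiff_succ_iff_deriv.mp hw11).2.2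
  have hdw2 : Differentiable ℝ (deriv w) := (contDiff_one_iff_deriv.mp hw1d).1
  have hcw2 : Continuous (deriv (deriv w)) := (contDiff_one_iff_deriv.mp hw1d).2
  have hcdw : Continuous (deriv w) := hdw2.continuous
  have hcw : Continuous w := hdw.continuous
  have hdT : Differentiable ℝ T := hT.differentiable one_ne_zero
  have hcT : Continuous T := hdT.continuous
  have hcdT : Continuous (deriv T) := (contDiff_one_iff_deriv.mp hT).2
  have hiter : iteratedDeriv 2 w = deriv (deriv w) := by
    rw [iteratedDeriv_succ, iteratedDeriv_one]
  -- basic quantities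
  set IT := ∫ z in (0:ℝ)..1, (T z)^2 with hITdef
  set IP := ∫ z in (0:ℝ)..1, (deriv T z)^2 with hIPdef
  have hIT : 0 ≤ IT := intervalIntegral.integral_nonneg zero_le_one (fun x _ => sq_nonneg _)
  have hIP : 0 ≤ IP := intervalIntegral.integral_nonneg zero_le_one (fun x _ => sq_nonneg _)
  set S := Real.sqrt IT with hSdef
  set P := Real.sqrt IP with hPdef
  have hSnn : 0 ≤ S := Real.sqrt_nonneg _
  have hPnn : 0 ≤ P := Real.sqrt_nonneg _
  have hS2 : S^2 = IT := Real.sq_sqrt hIT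
  have hP2 : P^2 = IP := Real.sq_sqrt hIP
  rw [← Real.sqrt_eq_rpow] at hsup
  set M := c₀ * R * k * S with hMdef
  have hM0 : 0 ≤ M := mul_nonneg (mul_nonneg (mul_nonneg hc₀nn hR.le) hk.le) hSnn
  -- sup bound on second derivative
  have hMb : ∀ z ∈ Set.Icc (0:ℝ) 1, |deriv (deriv w) z| ≤ M := by
    have hcont : Continuous (iteratedDeriv 2 w) := by rw [hiter]; exact hcw2
    have hbdd : BddAbove (Set.range fun z : Set.Icc (0:ℝ) 1 => |iteratedDeriv 2 w z.1|) :=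
      (isCompact_range ((hcont.comp continuous_subtype_val).abs)).bddAbove
    intro z hz
    rw [← hiter]
    exact le_trans (le_ciSup hbdd ⟨z, hz⟩) hsup
  -- pointwise bounds on w and T
  have hw'l := deriv_bound_left w M hdw2 hMb hw'0
  have hw'r := deriv_bound_right w M hdw2 hMb hw'1
  have hwl := fn_bound_left w M hdw hcdw hw'l hw0
  have hwr := fn_bound_right w M hdw hcdw hw'r hw1
  have hQle : ∀ z ∈ Set.Icc (0:ℝ) 1, (∫ t in (0:ℝ)..z, (deriv T t)^2) ≤ IP := by
    intro z hz
    have hadd : (∫ t in (0:ℝ)..z, (deriv T t)^2) + (∫ t in z..(1:ℝ), (deriv T t)^2) = IP :=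
      intervalIntegral.integral_add_adjacent_intervals
        (((hcdT.pow 2).intervalIntegrable _ _)) (((hcdT.pow 2).intervalIntegrable _ _))
    have h2 : (0:ℝ) ≤ ∫ t in z..(1:ℝ), (deriv T t)^2 :=
      intervalIntegral.integral_nonneg hz.2 (fun x _ => sq_nonneg _)
    linarith
  have hQle' : ∀ z ∈ Set.Icc (0:ℝ) 1, (∫ t in z..(1:ℝ), (deriv T t)^2) ≤ IP := by
    intro z hz
    have hadd : (∫ t in (0:ℝ)..z, (deriv T t)^2) + (∫ t in z..(1:ℝ), (deriv T t)^2) = IP :=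
      intervalIntegral.integral_add_adjacent_intervals
        (((hcdT.pow 2).intervalIntegrable _ _)) (((hcdT.pow 2).intervalIntegrable _ _))
    have h2 : (0:ℝ) ≤ ∫ t in (0:ℝ)..z, (deriv T t)^2 :=
      intervalIntegral.integral_nonneg hz.1 (fun x _ => sq_nonneg _)
    linarith
  have hTl : ∀ z ∈ Set.Icc (0:ℝ) 1, |T z| ≤ Real.sqrt z * P := by
    intro z hz
    have hftc : (∫ t in (0:ℝ)..z, deriv T t) = T z - T 0 :=
      intervalIntegral.integral_deriv_eq_sub (fun x _ => hdT x) (hcdT.intervalIntegrable _ _)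
    have hcs := cs_interval (deriv T) hcdT 0 z hz.1
    rw [hftc, hT0, sub_zero, sub_zero] at hcs
    refine hcs.trans (mul_le_mul_of_nonneg_left ?_ (Real.sqrt_nonneg z))
    exact Real.sqrt_le_sqrt (hQle z hz)
  have hTr : ∀ z ∈ Set.Icc (0:ℝ) 1, |T z| ≤ Real.sqrt (1-z) * P := by
    intro z hz
    have hftc : (∫ t in z..(1:ℝ), deriv T t) = T 1 - T z :=
      intervalIntegral.integral_deriv_eq_sub (fun x _ => hdT x) (hcdT.intervalIntegrable _ _)
    have hcs := cs_interval (deriv T) hcdT z 1 hz.2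
    rw [hftc, hT1, zero_sub, abs_neg] at hcs
    refine hcs.trans (mul_le_mul_of_nonneg_left ?_ (Real.sqrt_nonneg _))
    exact Real.sqrt_le_sqrt (hQle' z hz)
  -- geometry
  have hδε : δ < 1 - ε := by linarith
  have h1ε : (0:ℝ) < 1 - ε := by linarith
  have h1A : (0:ℝ) < 1 - A := by linarith
  -- a.e. avoidance of the two kink points
  have hae : ∀ᵐ x : ℝ, x ≠ δ ∧ x ≠ 1-ε := by
    have h1 : ∀ᵐ x : ℝ, x ≠ δ := by
      rw [MeasureTheory.ae_iff]
      simp only [ne_eq, not_not, Set.setOf_eq_eq_singleton]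
      exact measure_singleton δ
    have h2 : ∀ᵐ x : ℝ, x ≠ 1-ε := by
      rw [MeasureTheory.ae_iff]
      simp only [ne_eq, not_not, Set.setOf_eq_eq_singleton]
      exact measure_singleton _
    exact h1.and h2
  set g₁ : ℝ → ℝ := fun z => -(1-A)/δ * w z * T z with hg₁
  set g₃ : ℝ → ℝ := fun z => -(A*(1-ε)/ε)/z^2 * w z * T z with hg₃
  have hg₁c : Continuous g₁ := (continuous_const.mul hcw).mul hcT
  have hg₃c : ContinuousOn g₃ (Set.Icc (1-ε) 1) := by
    apply ((continuousOn_const.div (continuous_pow 2).continuousOn ?_).mul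
      hcw.continuousOn).mul hcT.continuousOn
    intro x hx
    exact pow_ne_zero _ (ne_of_gt (lt_of_lt_of_le h1ε hx.1))
  -- a.e. equality of integrands on the three pieces
  have hfe1 : ∀ᵐ x ∂(volume : Measure ℝ), x ∈ Set.uIoc (0:ℝ) δ → τ' x * w x * T x = g₁ x := by
    filter_upwards [hae] with x hx hmem
    rw [Set.uIoc_of_le hδ0.le] at hmem
    have hx2 : x ∈ Set.Ioo (0:ℝ) δ := ⟨hmem.1, lt_of_le_of_ne hmem.2 hx.1⟩
    rw [hτ1 x hx2]
  have hfe2 : ∀ᵐ x ∂(volume : Measure ℝ), x ∈ Set.uIoc δ (1-ε) → τ' x * w x * T x = 0 := by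
    filter_upwards [hae] with x hx hmem
    rw [Set.uIoc_of_le hδε.le] at hmem
    have hx2 : x ∈ Set.Ioo δ (1-ε) := ⟨hmem.1, lt_of_le_of_ne hmem.2 hx.2⟩
    rw [hτ2 x hx2]
    ring
  have hfe3 : ∀ᵐ x ∂(volume : Measure ℝ), x ∈ Set.uIoc (1-ε) (1:ℝ) → τ' x * w x * T x = g₃ x := by
    apply Filter.Eventually.of_forall
    intro x hmem
    rw [Set.uIoc_of_le (by linarith : (1-ε) ≤ (1:ℝ))] at hmem
    rcases eq_or_lt_of_le hmem.2 with h1 | h1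
    · simp [h1, hw1, hg₃]
    · rw [hτ3 x ⟨hmem.1, h1⟩]
  -- integrability on the pieces
  have hii1 : IntervalIntegrable (fun z => τ' z * w z * T z) volume 0 δ := by
    rw [intervalIntegrable_iff]
    have h := hg₁c.intervalIntegrable (μ := volume) 0 δ
    rw [intervalIntegrable_iff] at h
    apply h.congr
    filter_upwards [ae_restrict_of_ae hfe1, ae_restrict_mem measurableSet_uIoc] with x h1 h2
    exact (h1 h2).symm
  have hii2 : IntervalIntegrable (fun z => τ' z * w z * T z) volume δ (1-ε) := by
    rw [intervalIntegrable_iff]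
    have h := (continuous_const : Continuous fun _ : ℝ => (0:ℝ)).intervalIntegrable (μ := volume) δ (1-ε)
    rw [intervalIntegrable_iff] at h
    apply h.congr
    filter_upwards [ae_restrict_of_ae hfe2, ae_restrict_mem measurableSet_uIoc] with x h1 h2
    exact (h1 h2).symm
  have hii3 : IntervalIntegrable (fun z => τ' z * w z * T z) volume (1-ε) 1 := by
    rw [intervalIntegrable_iff]
    have h : IntegrableOn g₃ (Set.uIoc (1-ε) 1) volume := by
      rw [Set.uIoc_of_le (by linarith : (1-ε) ≤ (1:ℝ))]
      exact (hg₃c.integrableOn_Icc).mono_set Set.Ioc_subset_Icc_self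
    apply h.congr
    filter_upwards [ae_restrict_of_ae hfe3, ae_restrict_mem measurableSet_uIoc] with x h1 h2
    exact (h1 h2).symm
  -- decomposition
  have e1 := intervalIntegral.integral_add_adjacent_intervals hii1 hii2
  have e2 := intervalIntegral.integral_add_adjacent_intervals (hii1.trans hii2) hii3
  have hI2 : (∫ z in δ..(1-ε), τ' z * w z * T z) = 0 := by
    rw [intervalIntegral.integral_congr_ae hfe2]
    simp
  have hI1 : (∫ z in (0:ℝ)..δ, τ' z * w z * T z) = ∫ z in (0:ℝ)..δ, g₁ z :=
    intervalIntegral.integral_congr_ae hfe1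
  have hI3 : (∫ z in (1-ε)..(1:ℝ), τ' z * w z * T z) = ∫ z in (1-ε)..(1:ℝ), g₃ z :=
    intervalIntegral.integral_congr_ae hfe3
  -- estimate on [0,δ]
  set B1 := (1-A)/δ * (M/2) * P with hB1
  have hMz : ∀ z : ℝ, 0 ≤ M * z^2 / 2 := fun z => by positivity
  have hbound1 : ∀ z ∈ Set.Icc (0:ℝ) δ, |g₁ z| ≤ B1 * (z^2 * Real.sqrt z) := by
    intro z hz
    have hz1 : z ∈ Set.Icc (0:ℝ) 1 := ⟨hz.1, hz.2.trans (by linarith)⟩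
    have h1 : |g₁ z| = (1-A)/δ * |w z| * |T z| := by
      show |(-(1-A)/δ * w z * T z)| = _
      rw [abs_mul, abs_mul, abs_div, abs_neg, abs_of_pos h1A, abs_of_pos hδ0]
    rw [h1]
    have h2 := hwl z hz1
    have h3 := hTl z hz1
    have h4 : (1-A)/δ * |w z| ≤ (1-A)/δ * (M*z^2/2) :=
      mul_le_mul_of_nonneg_left h2 (by positivity)
    calc (1-A)/δ * |w z| * |T z| ≤ ((1-A)/δ * (M*z^2/2)) * (Real.sqrt z * P) :=
          mul_le_mul h4 h3 (abs_nonneg _) (mul_nonneg (by positivity) (hMz z))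
      _ = B1 * (z^2 * Real.sqrt z) := by rw [hB1]; ring
  have hIb1 : |∫ z in (0:ℝ)..δ, g₁ z| ≤ B1 * ((2/7)*δ^3*Real.sqrt δ) := by
    calc |∫ z in (0:ℝ)..δ, g₁ z| ≤ ∫ z in (0:ℝ)..δ, |g₁ z| :=
          intervalIntegral.abs_integral_le_integral_abs hδ0.le
      _ ≤ ∫ z in (0:ℝ)..δ, B1 * (z^2 * Real.sqrt z) :=
          intervalIntegral.integral_mono_on hδ0.le (hg₁c.abs.intervalIntegrable _ _)
            ((continuous_const.mul ((continuous_pow 2).mul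
              Real.continuous_sqrt)).intervalIntegrable _ _) hbound1
      _ = B1 * ((2/7)*δ^3*Real.sqrt δ) := by
          rw [intervalIntegral.integral_const_mul, integral_sq_sqrt δ hδ0.le]
  have hX1 : (0:ℝ) ≤ M*P/7*(δ^2*Real.sqrt δ) := by
    have := Real.sqrt_nonneg δ
    positivity
  have hIb1' : |∫ z in (0:ℝ)..δ, g₁ z| ≤ M*P/7*(δ^2*Real.sqrt δ) := by
    refine hIb1.trans ?_
    have heq : B1*((2/7)*δ^3*Real.sqrt δ) = (1-A)*(M*P/7*(δ^2*Real.sqrt δ)) := by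
      rw [hB1]; field_simp
    rw [heq]
    linarith [mul_nonneg hA0.le hX1]
  -- estimate on [1-ε,1]
  set B3 := 3*A/(2*ε) * (M/2) * P with hB3
  have hbound3 : ∀ z ∈ Set.Icc (1-ε) (1:ℝ), |g₃ z| ≤ B3 * ((1-z)^2 * Real.sqrt (1-z)) := by
    intro z hz
    have hz0 : 0 < z := lt_of_lt_of_le h1ε hz.1
    have hz1 : z ∈ Set.Icc (0:ℝ) 1 := ⟨hz0.le, hz.2⟩
    have h1 : |g₃ z| = (A*(1-ε)/ε)/z^2 * |w z| * |T z| := by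
      show |(-(A*(1-ε)/ε)/z^2 * w z * T z)| = _
      rw [abs_mul, abs_mul, abs_div, abs_neg, abs_of_pos (by positivity),
        abs_of_pos (by positivity)]
    rw [h1]
    have hcoef : (A*(1-ε)/ε)/z^2 ≤ 3*A/(2*ε) := by
      rw [div_div]
      rw [div_le_div_iff₀ (by positivity) (by positivity)]
      have hAε : (0:ℝ) ≤ A*ε := mul_nonneg hA0.le hε0.le
      have k1 : (1-ε)^2 ≤ z^2 := pow_le_pow_left₀ h1ε.le hz.1 2
      have k2 : 2*(1-ε) ≤ 3*(1-ε)^2 := by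
        have h := mul_nonneg h1ε.le (show (0:ℝ) ≤ 1-3*ε by linarith)
        linarith only [h, sq_nonneg (1-ε)]
      calc A*(1-ε)*(2*ε) = A*ε*(2*(1-ε)) := by ring
        _ ≤ A*ε*(3*(1-ε)^2) := mul_le_mul_of_nonneg_left k2 hAε
        _ ≤ A*ε*(3*z^2) := mul_le_mul_of_nonneg_left (by linarith) hAε
        _ = 3*A*(ε*z^2) := by ring
    have h2 := hwr z hz1
    have h3 := hTr z hz1
    have h4 : (A*(1-ε)/ε)/z^2 * |w z| ≤ (3*A/(2*ε)) * (M*(1-z)^2/2) := by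
      apply mul_le_mul hcoef h2 (abs_nonneg _) (by positivity)
    calc (A*(1-ε)/ε)/z^2 * |w z| * |T z|
        ≤ ((3*A/(2*ε)) * (M*(1-z)^2/2)) * (Real.sqrt (1-z) * P) :=
          mul_le_mul h4 h3 (abs_nonneg _) (mul_nonneg (by positivity) (by positivity))
      _ = B3 * ((1-z)^2 * Real.sqrt (1-z)) := by rw [hB3]; ring
  have hg₃int : IntervalIntegrable g₃ volume (1-ε) 1 := by
    apply ContinuousOn.intervalIntegrable
    rw [Set.uIcc_of_le (by linarith : (1-ε) ≤ (1:ℝ))]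
    exact hg₃c
  have hg₃absint : IntervalIntegrable (fun z => |g₃ z|) volume (1-ε) 1 := by
    apply ContinuousOn.intervalIntegrable
    rw [Set.uIcc_of_le (by linarith : (1-ε) ≤ (1:ℝ))]
    exact hg₃c.abs
  have hcomp : (∫ x in (1-ε)..(1:ℝ), (1-x)^2*Real.sqrt (1-x)) = (2/7)*ε^3*Real.sqrt ε := by
    have h := intervalIntegral.integral_comp_sub_left (a := 1-ε) (b := 1)
      (fun t : ℝ => t^2*Real.sqrt t) 1
    norm_num at h
    rw [h]
    exact integral_sq_sqrt ε hε0.le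
  have hIb3 : |∫ z in (1-ε)..(1:ℝ), g₃ z| ≤ B3 * ((2/7)*ε^3*Real.sqrt ε) := by
    calc |∫ z in (1-ε)..(1:ℝ), g₃ z| ≤ ∫ z in (1-ε)..(1:ℝ), |g₃ z| :=
          intervalIntegral.abs_integral_le_integral_abs (by linarith)
      _ ≤ ∫ z in (1-ε)..(1:ℝ), B3 * ((1-z)^2 * Real.sqrt (1-z)) :=
          intervalIntegral.integral_mono_on (by linarith) hg₃absint
            ((continuous_const.mul (((continuous_const.sub continuous_id).pow 2).mul
              (Real.continuous_sqrt.comp (continuous_const.sub continuous_id)))).intervalIntegrable _ _)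
            hbound3
      _ = B3 * ((2/7)*ε^3*Real.sqrt ε) := by
          rw [intervalIntegral.integral_const_mul, hcomp]
  have hIb3' : |∫ z in (1-ε)..(1:ℝ), g₃ z| ≤ 3/14*A*M*P*(ε^2*Real.sqrt ε) := by
    refine hIb3.trans (le_of_eq ?_)
    rw [hB3]; field_simp; ring
  -- combine with Young's inequality
  have hd : Real.sqrt δ * Real.sqrt δ = δ := Real.mul_self_sqrt hδ0.le
  have he : Real.sqrt ε * Real.sqrt ε = ε := Real.mul_self_sqrt hε0.le
  have hδ5 : δ^5 = (δ^2*Real.sqrt δ)^2 := by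
    have h : (δ^2*Real.sqrt δ)^2 = δ^4*(Real.sqrt δ*Real.sqrt δ) := by ring
    rw [h, hd]; ring
  have hε5 : ε^5 = (ε^2*Real.sqrt ε)^2 := by
    have h : (ε^2*Real.sqrt ε)^2 = ε^4*(Real.sqrt ε*Real.sqrt ε) := by ring
    rw [h, he]; ring
  have hkey := young_aux β (k*S) (c₀*R*P) (δ^2*Real.sqrt δ/7) (3*A*ε^2*Real.sqrt ε/14) hβ
  have hfinal : c₀*R*k*S*P*(δ^2*Real.sqrt δ/7 + 3*A*ε^2*Real.sqrt ε/14)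
      ≤ β*k^2*IT + (c₀^2*δ^5*R^2/(98*β) + 25*c₀^2*A^2*ε^5*R^2/(392*β))*IP := by
    rw [← hS2, ← hP2, hδ5, hε5]
    calc c₀*R*k*S*P*(δ^2*Real.sqrt δ/7 + 3*A*ε^2*Real.sqrt ε/14)
        = (k*S)*(c₀*R*P)*((δ^2*Real.sqrt δ/7) + (3*A*ε^2*Real.sqrt ε/14)) := by ring
      _ ≤ β*(k*S)^2 + ((δ^2*Real.sqrt δ/7)^2/(2*β)
            + 25*(3*A*ε^2*Real.sqrt ε/14)^2/(18*β))*(c₀*R*P)^2 := hkey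
      _ = β*k^2*S^2 + (c₀^2*(δ^2*Real.sqrt δ)^2*R^2/(98*β)
            + 25*c₀^2*A^2*(ε^2*Real.sqrt ε)^2*R^2/(392*β))*P^2 := by
          field_simp; ring
  have hMP1 : M*P/7*(δ^2*Real.sqrt δ) + 3/14*A*M*P*(ε^2*Real.sqrt ε)
      = c₀*R*k*S*P*(δ^2*Real.sqrt δ/7 + 3*A*ε^2*Real.sqrt ε/14) := by
    rw [hMdef]; ring
  have hI1ge : (∫ z in (0:ℝ)..δ, τ' z * w z * T z) ≥ -(M*P/7*(δ^2*Real.sqrt δ)) := by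
    rw [hI1]
    exact le_trans (neg_le_neg hIb1') (neg_abs_le _)
  have hI3ge : (∫ z in (1-ε)..(1:ℝ), τ' z * w z * T z) ≥ -(3/14*A*M*P*(ε^2*Real.sqrt ε)) := by
    rw [hI3]
    exact le_trans (neg_le_neg hIb3') (neg_abs_le _)
  have hgoal : (∫ z in (0:ℝ)..(1:ℝ), τ' z * w z * T z)
      = (∫ z in (0:ℝ)..δ, τ' z * w z * T z) + (∫ z in (1-ε)..(1:ℝ), τ' z * w z * T z) := by
    rw [← e2, ← e1, hI2]
    ring
  have hsum2 : -(M*P/7*(δ^2*Real.sqrt δ)) - 3/14*A*M*P*(ε^2*Real.sqrt ε)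
      ≥ -(β*k^2*IT) - (c₀^2*δ^5*R^2/(98*β) + 25*c₀^2*A^2*ε^5*R^2/(392*β))*IP := by
    have h1 : M*P/7*(δ^2*Real.sqrt δ) + 3/14*A*M*P*(ε^2*Real.sqrt ε)
        ≤ β*k^2*IT + (c₀^2*δ^5*R^2/(98*β) + 25*c₀^2*A^2*ε^5*R^2/(392*β))*IP := by
      rw [hMP1]; exact hfinal
    have h2 := neg_le_neg h1
    calc -(β*k^2*IT) - (c₀^2*δ^5*R^2/(98*β) + 25*c₀^2*A^2*ε^5*R^2/(392*β))*IP
        = -(β*k^2*IT + (c₀^2*δ^5*R^2/(98*β) + 25*c₀^2*A^2*ε^5*R^2/(392*β))*IP) := by ring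
      _ ≤ -(M*P/7*(δ^2*Real.sqrt δ) + 3/14*A*M*P*(ε^2*Real.sqrt ε)) := h2
      _ = -(M*P/7*(δ^2*Real.sqrt δ)) - 3/14*A*M*P*(ε^2*Real.sqrt ε) := by ring
  rw [hgoal]
  have h6 : -(M*P/7*(δ^2*Real.sqrt δ)) + -(3/14*A*M*P*(ε^2*Real.sqrt ε))
      ≤ (∫ z in (0:ℝ)..δ, τ' z * w z * T z) + (∫ z in (1-ε)..(1:ℝ), τ' z * w z * T z) :=
    add_le_add hI1ge hI3ge
  have h7 : -(β*k^2*IT) - (c₀^2*δ^5*R^2/(98*β) + 25*c₀^2*A^2*ε^5*R^2/(392*β))*IP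
      ≤ -(M*P/7*(δ^2*Real.sqrt δ)) + -(3/14*A*M*P*(ε^2*Real.sqrt ε)) := by
    rw [show -(M*P/7*(δ^2*Real.sqrt δ)) + -(3/14*A*M*P*(ε^2*Real.sqrt ε))
      = -(M*P/7*(δ^2*Real.sqrt δ)) - 3/14*A*M*P*(ε^2*Real.sqrt ε) from by ring]
    exact hsum2
  exact le_trans h7 h6
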